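/- For the dihedral group I_2(m) acting on ℝ² with invariants p_1(x) = x_1² + x_2² and p_2(x) = Re[(x_1 + i·x_2)^m], the Gram matrix of gradients is P(x) = [[4·p_1(x), 2m·p_2(x)], [2m·p_2(x), m²·p_1(x)^{m−1}]]; in particular ∇p_2(x)·∇p_2(x) = m²·(x_1² + x_2²)^{m−1} and ∇p_1(x)·∇p_2(x) = 2m·p_2(x), and det P(x) = 4m²·(p_1(x)^m − p_2(x)²). -/

import Mathlib

open Matrix

/-- The gradient of a function on `ℝ²`: the vector of partial derivatives. -/
noncomputable def gradVec2 (f : (Fin 2 → ℝ) → ℝ) (x : Fin 2 → ℝ) : Fin 2 → ℝ :=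
  fun i => fderiv ℝ f x (Pi.single i 1)

/-- The quadratic invariant of the dihedral group `I₂(m)`. -/
noncomputable def dihP1 : (Fin 2 → ℝ) → ℝ := fun x => x 0 ^ 2 + x 1 ^ 2

/-- The degree-`m` invariant of the dihedral group `I₂(m)`: `Re[(x₁ + i·x₂)^m]`. -/
noncomputable def dihP2 (m : ℕ) : (Fin 2 → ℝ) → ℝ :=
  fun x => (((x 0 : ℂ) + Complex.I * (x 1 : ℂ)) ^ m).re

/-- The Gram matrix of gradients of the invariants of `I₂(m)`. -/
noncomputable def dihGram (m : ℕ) (x : Fin 2 → ℝ) : Matrix (Fin 2) (Fin 2) ℝ :=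
  Matrix.of fun a b =>
    ∑ i : Fin 2, gradVec2 (![dihP1, dihP2 m] a) x i * gradVec2 (![dihP1, dihP2 m] b) x i

open ContinuousLinearMap in
lemma grad_dihP1 (x : Fin 2 → ℝ) (i : Fin 2) : gradVec2 dihP1 x i = 2 * x i := by
  have h0 : HasFDerivAt dihP1
      (((2 * x 0 ^ 1) • (proj 0 : (Fin 2 → ℝ) →L[ℝ] ℝ))
        + ((2 * x 1 ^ 1) • (proj 1 : (Fin 2 → ℝ) →L[ℝ] ℝ))) x := by
    exact ((hasDerivAt_pow 2 (x 0)).comp_hasFDerivAt x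
        (proj 0 : (Fin 2 → ℝ) →L[ℝ] ℝ).hasFDerivAt).add
      ((hasDerivAt_pow 2 (x 1)).comp_hasFDerivAt x
        (proj 1 : (Fin 2 → ℝ) →L[ℝ] ℝ).hasFDerivAt)
  rw [gradVec2, h0.fderiv]
  fin_cases i <;> simp

open ContinuousLinearMap in
lemma grad_dihP2 (m : ℕ) (hm : 1 ≤ m) (x : Fin 2 → ℝ) (i : Fin 2) :
    gradVec2 (dihP2 m) x i
      = ((![1, Complex.I] i) * ((m : ℂ) * ((x 0 : ℂ) + Complex.I * x 1) ^ (m - 1))).re := by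
  set w : ℂ := (x 0 : ℂ) + Complex.I * x 1 with hw
  set L : (Fin 2 → ℝ) →L[ℝ] ℂ :=
    Complex.ofRealCLM.comp (proj 0) + Complex.I • Complex.ofRealCLM.comp (proj 1) with hL
  have hg : HasFDerivAt (fun y : Fin 2 → ℝ => ((y 0 : ℂ) + Complex.I * y 1)) L x := by
    have h0 : HasFDerivAt (fun y : Fin 2 → ℝ => ((y 0 : ℝ) : ℂ))
        (Complex.ofRealCLM.comp (proj 0)) x :=
      Complex.ofRealCLM.hasFDerivAt.comp x (proj 0 : (Fin 2 → ℝ) →L[ℝ] ℝ).hasFDerivAt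
    have h1 : HasFDerivAt (fun y : Fin 2 → ℝ => ((y 1 : ℝ) : ℂ))
        (Complex.ofRealCLM.comp (proj 1)) x :=
      Complex.ofRealCLM.hasFDerivAt.comp x (proj 1 : (Fin 2 → ℝ) →L[ℝ] ℝ).hasFDerivAt
    exact h0.add (h1.const_mul Complex.I)
  have hpow : HasFDerivAt (fun z : ℂ => z ^ m)
      ((smulRight (1 : ℂ →L[ℂ] ℂ) ((m : ℂ) * w ^ (m - 1)))) w :=
    (hasDerivAt_pow m w).hasFDerivAt
  have htot : HasFDerivAt (dihP2 m)
      ((Complex.reCLM.comp ((smulRight (1 : ℂ →L[ℂ] ℂ)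
        ((m : ℂ) * w ^ (m - 1))).restrictScalars ℝ)).comp L) x :=
    by have h := (Complex.reCLM.hasFDerivAt.comp x ((hpow.restrictScalars ℝ).comp x hg)); exact h
  rw [gradVec2, htot.fderiv]
  fin_cases i <;>
    simp [hL, Complex.ofReal_pow, mul_comm]

theorem dihedral_P_matrix (m : ℕ) (hm : 2 ≤ m) (x : Fin 2 → ℝ) :
    dihGram m x
      = !![4 * dihP1 x, 2 * m * dihP2 m x;
           2 * m * dihP2 m x, (m : ℝ) ^ 2 * dihP1 x ^ (m - 1)]
    ∧ (dihGram m x).det = 4 * (m : ℝ) ^ 2 * (dihP1 x ^ m - dihP2 m x ^ 2) := by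
  have hm1 : 1 ≤ m := le_trans (by norm_num) hm
  set w : ℂ := (x 0 : ℂ) + Complex.I * x 1 with hw
  set c : ℂ := (m : ℂ) * w ^ (m - 1) with hc
  have hwm : w * w ^ (m - 1) = w ^ m := by
    rw [← pow_succ']
    congr 1
    omega
  have hnormw : Complex.normSq w = dihP1 x := by
    simp [hw, dihP1, Complex.normSq_apply]
    ring
  have hg2 : ∀ i, gradVec2 (dihP2 m) x i = ((![1, Complex.I] i) * c).re :=
    fun i => grad_dihP2 m hm1 x i
  have hwc : (w * c).re = (m : ℝ) * dihP2 m x := by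
    have h1 : w * c = (m : ℂ) * w ^ m := by
      calc w * c = (m : ℂ) * (w * w ^ (m - 1)) := by rw [hc]; ring
      _ = (m : ℂ) * w ^ m := by rw [hwm]
    have h2 : dihP2 m x = (w ^ m).re := rfl
    rw [h1, h2]
    simp [Complex.mul_re]
  have g00 : dihGram m x 0 0 = 4 * dihP1 x := by
    simp [dihGram, Fin.sum_univ_two, grad_dihP1, dihP1]
    ring
  have g01 : dihGram m x 0 1 = 2 * m * dihP2 m x := by
    simp only [dihGram, Matrix.of_apply, Fin.sum_univ_two, Matrix.cons_val_zero,
      Matrix.cons_val_one, Matrix.head_cons, grad_dihP1, hg2, one_mul]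
    have : (2 : ℝ) * x 0 * c.re
        + 2 * x 1 * (Complex.I * c).re = 2 * (w * c).re := by
      simp [hw, Complex.mul_re]
      ring
    rw [this, hwc]
    ring
  have g10 : dihGram m x 1 0 = 2 * m * dihP2 m x := by
    rw [← g01]
    simp only [dihGram, Matrix.of_apply, Fin.sum_univ_two]
    ring
  have g11 : dihGram m x 1 1 = (m : ℝ) ^ 2 * dihP1 x ^ (m - 1) := by
    simp only [dihGram, Matrix.of_apply, Fin.sum_univ_two, Matrix.cons_val_zero,
      Matrix.cons_val_one, Matrix.head_cons, hg2, one_mul]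
    have h1 : c.re * c.re
        + (Complex.I * c).re * (Complex.I * c).re = Complex.normSq c := by
      simp [Complex.normSq_apply, Complex.mul_re]
    rw [h1, hc, _root_.map_mul, _root_.map_pow, hnormw, Complex.normSq_natCast]
    push_cast
    ring
  have key : dihGram m x
      = !![4 * dihP1 x, 2 * m * dihP2 m x;
           2 * m * dihP2 m x, (m : ℝ) ^ 2 * dihP1 x ^ (m - 1)] := by
    ext a b
    fin_cases a <;> fin_cases b
    · simpa using g00
    · simpa using g01
    · simpa using g10
    · simpa using g11
  refine ⟨key, ?_⟩
  rw [key, Matrix.det_fin_two_of]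
  have hp1 : dihP1 x * dihP1 x ^ (m - 1) = dihP1 x ^ m := by
    rw [← pow_succ']
    congr 1
    omega
  nlinarith [hp1]
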